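/- Let u, y : ℝ → ℤ → ℂ be functions differentiable in t, let α, β, γ ∈ ℂ, and suppose that for all n ∈ ℤ: ∂ₜuₙ = uₙ(uₙ₊₁(uₙ₊₂ + uₙ₊₁ + uₙ) − uₙ₋₁(uₙ + uₙ₋₁ + uₙ₋₂)), ∂ₜyₙ = uₙ(uₙ₊₁(yₙ₊₂ − yₙ) + (uₙ₊₁ + 2uₙ + uₙ₋₁)(yₙ₊₁ − yₙ₋₁) + uₙ₋₁(yₙ − yₙ₋₂)), and yₙ + yₙ₋₁ ≠ 0. Define Fₙ = uₙ(yₙ₊₁ + yₙ)(yₙ + yₙ₋₁) − αyₙ² − (−1)ⁿβyₙ − γ and Gₙ = (Fₙ − Fₙ₋₁)/(yₙ + yₙ₋₁). Then for all n: ∂ₜFₙ = uₙuₙ₊₁(yₙ + yₙ₋₁)Gₙ₊₂ + uₙ(uₙ₋₁(yₙ₋₁ + yₙ₋₂) + 2(uₙ₊₁ + uₙ)(yₙ + yₙ₋₁))Gₙ₊₁ + uₙ(uₙ₊₁(yₙ₊₂ + yₙ₊₁) + 2(uₙ + uₙ₋₁)(yₙ₊₁ + yₙ))Gₙ + uₙuₙ₋₁(yₙ₊₁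 + yₙ)Gₙ₋₁. -/

import Mathlib

/-- consistency of the negative-symmetry constraint of the Volterra
lattice with the `t`-flow (the first higher symmetry) and its prolongation. -/
theorem volterra_constraint_t_flow
    (u y : ℝ → ℤ → ℂ) (α β γ : ℂ)
    (hu : ∀ (t : ℝ) (n : ℤ), HasDerivAt (fun t => u t n)
      (u t n * (u t (n + 1) * (u t (n + 2) + u t (n + 1) + u t n)
        - u t (n - 1) * (u t n + u t (n - 1) + u t (n - 2)))) t)
    (hy : ∀ (t : ℝ) (n : ℤ), HasDerivAt (fun t => y t n)
      (u t n * (u t (n + 1) * (y t (n + 2) - y t n)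
        + (u t (n + 1) + 2 * u t n + u t (n - 1)) * (y t (n + 1) - y t (n - 1))
        + u t (n - 1) * (y t n - y t (n - 2)))) t)
    (hden : ∀ (t : ℝ) (n : ℤ), y t n + y t (n - 1) ≠ 0)
    (F G : ℝ → ℤ → ℂ)
    (hF : ∀ (t : ℝ) (n : ℤ), F t n =
      u t n * (y t (n + 1) + y t n) * (y t n + y t (n - 1))
        - α * (y t n) ^ 2 - (-1 : ℂ) ^ n * β * y t n - γ)
    (hG : ∀ (t : ℝ) (n : ℤ), G t n = (F t n - F t (n - 1)) / (y t n + y t (n - 1))) :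
    ∀ (t : ℝ) (n : ℤ), HasDerivAt (fun t => F t n)
      (u t n * u t (n + 1) * (y t n + y t (n - 1)) * G t (n + 2)
        + u t n * (u t (n - 1) * (y t (n - 1) + y t (n - 2))
            + 2 * (u t (n + 1) + u t n) * (y t n + y t (n - 1))) * G t (n + 1)
        + u t n * (u t (n + 1) * (y t (n + 2) + y t (n + 1))
            + 2 * (u t n + u t (n - 1)) * (y t (n + 1) + y t n)) * G t n
        + u t n * u t (n - 1) * (y t (n + 1) + y t n) * G t (n - 1)) t := by
  intro t n
  -- index normalizations
  have i1 : n + 1 + 1 = n + 2 := by ring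
  have i2 : n + 1 + 2 = n + 3 := by ring
  have i3 : n + 1 - 1 = n := by ring
  have i4 : n + 1 - 2 = n - 1 := by ring
  have i5 : n - 1 + 1 = n := by ring
  have i6 : n - 1 + 2 = n + 1 := by ring
  have i7 : n - 1 - 1 = n - 2 := by ring
  have i8 : n - 1 - 2 = n - 3 := by ring
  have i9 : n + 2 - 1 = n + 1 := by ring
  have i10 : n + 2 + 1 = n + 3 := by ring
  have i11 : n - 2 + 1 = n - 1 := by ring
  have i12 : n - 2 - 1 = n - 3 := by ring
  have Du := hu t n
  have Dy0 := hy t n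
  have Dy1 := hy t (n + 1)
  rw [i1, i2, i3, i4] at Dy1
  have Dym1 := hy t (n - 1)
  rw [i5, i6, i7, i8] at Dym1
  have hFfun : (fun t => F t n) = fun t =>
      u t n * (y t (n + 1) + y t n) * (y t n + y t (n - 1))
        - α * (y t n * y t n) - (-1 : ℂ) ^ n * β * y t n - γ :=
    funext fun s => by rw [hF s n]; ring
  have hd := ((((Du.mul (Dy1.add Dy0)).mul (Dy0.add Dym1)).sub
      (HasDerivAt.const_mul α (Dy0.mul Dy0))).sub
      (HasDerivAt.const_mul ((-1 : ℂ) ^ n * β) Dy0)).sub_const γ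
  rw [hFfun]
  refine hd.congr_deriv ?_
  -- powers of -1
  have hm : (-1 : ℂ) ≠ 0 := by norm_num
  have p1 : (-1 : ℂ) ^ (n + 1) = -(-1 : ℂ) ^ n := by
    rw [zpow_add₀ hm, zpow_one]; ring
  have p2 : (-1 : ℂ) ^ (n + 2) = (-1 : ℂ) ^ n := by
    rw [zpow_add₀ hm]; norm_num
  have pm1 : (-1 : ℂ) ^ (n - 1) = -(-1 : ℂ) ^ n := by
    rw [zpow_sub₀ hm, zpow_one]; ring
  have pm2 : (-1 : ℂ) ^ (n - 2) = (-1 : ℂ) ^ n := by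
    rw [zpow_sub₀ hm]; norm_num
  -- denominators
  have d2 := hden t (n + 2); rw [i9] at d2
  have d1 := hden t (n + 1); rw [i3] at d1
  have d0 := hden t n
  have dm1 := hden t (n - 1); rw [i7] at dm1
  rw [hG t (n + 2), hG t (n + 1), hG t n, hG t (n - 1), i9, i3, i7,
    hF t (n + 2), hF t (n + 1), hF t n, hF t (n - 1), hF t (n - 2),
    i9, i10, i3, i1, i5, i7, i11, i12, p1, p2, pm1, pm2]
  simp only [Pi.add_apply, Pi.mul_apply]
  field_simp
  ring
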